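/- Fix a real s > 3/2. The second partial derivative of L(A;s) with respect to A, evaluated at A = 1/2, equals (64s(s+1)/81)·Σ'_{i,j,k∈ℤ} (jk + ik − 2ij)²/(i² + j² + k² − (2/3)(ij + ik + jk))^{s+2}, where the sum omits (i,j,k) = (0,0,0). -/

import Mathlib

/-- The quadratic form `g(A;i,j,k) = (A(i+j)² + (j+k)² + (i+k)²)/(A+1)`. -/
noncomputable def cuboidalG (A : ℝ) (p : ℤ × ℤ × ℤ) : ℝ :=
  (A * ((p.1 : ℝ) + (p.2.1 : ℝ))^2 + ((p.2.1 : ℝ) + (p.2.2 : ℝ))^2 +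
    ((p.1 : ℝ) + (p.2.2 : ℝ))^2) / (A + 1)

/-- The Epstein zeta function `L(A;s) = Σ'_{(i,j,k)≠(0,0,0)} g(A;i,j,k)^{-s}`. -/
noncomputable def epsteinL (A s : ℝ) : ℝ :=
  ∑' p : {p : ℤ × ℤ × ℤ // p ≠ 0}, (cuboidalG A p.1) ^ (-s)

namespace CuboidalAux
open Real

noncomputable def Nr (p : ℤ × ℤ × ℤ) : ℝ := (p.1 : ℝ)^2 + (p.2.1 : ℝ)^2 + (p.2.2 : ℝ)^2
noncomputable def U (p : ℤ × ℤ × ℤ) : ℝ := ((p.1 : ℝ) + (p.2.1 : ℝ))^2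
noncomputable def V (p : ℤ × ℤ × ℤ) : ℝ :=
  ((p.2.1 : ℝ) + (p.2.2 : ℝ))^2 + ((p.1 : ℝ) + (p.2.2 : ℝ))^2
noncomputable def Qr (p : ℤ × ℤ × ℤ) : ℝ :=
  (p.1 : ℝ)^2 + (p.2.1 : ℝ)^2 + (p.2.2 : ℝ)^2
    - 2/3 * ((p.1 : ℝ) * (p.2.1 : ℝ) + (p.1 : ℝ) * (p.2.2 : ℝ) + (p.2.1 : ℝ) * (p.2.2 : ℝ))
noncomputable def nr (p : ℤ × ℤ × ℤ) : ℝ :=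
  (p.2.1 : ℝ) * (p.2.2 : ℝ) + (p.1 : ℝ) * (p.2.2 : ℝ) - 2 * (p.1 : ℝ) * (p.2.1 : ℝ)

lemma one_le_Nr {p : ℤ × ℤ × ℤ} (hp : p ≠ 0) : 1 ≤ Nr p := by
  obtain ⟨i, j, k⟩ := p
  have h : i ≠ 0 ∨ j ≠ 0 ∨ k ≠ 0 := by
    by_contra h
    push_neg at h
    exact hp (by simp [Prod.ext_iff, h.1, h.2.1, h.2.2])
  have key : (1 : ℤ) ≤ i^2 + j^2 + k^2 := by
    rcases h with h | h | h <;> rcases h.lt_or_gt with h | h <;> nlinarith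
  have : ((1 : ℤ) : ℝ) ≤ ((i^2 + j^2 + k^2 : ℤ) : ℝ) := by exact_mod_cast key
  unfold Nr; push_cast at this ⊢; linarith

lemma U_nonneg (p : ℤ × ℤ × ℤ) : 0 ≤ U p := sq_nonneg _
lemma V_nonneg (p : ℤ × ℤ × ℤ) : 0 ≤ V p := add_nonneg (sq_nonneg _) (sq_nonneg _)
lemma Nr_nonneg (p : ℤ × ℤ × ℤ) : 0 ≤ Nr p := by
  unfold Nr; positivity

lemma Nr_le_UV (p : ℤ × ℤ × ℤ) : Nr p ≤ U p + V p := by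
  obtain ⟨i, j, k⟩ := p
  unfold Nr U V
  nlinarith [sq_nonneg ((i : ℝ) + (j : ℝ) + (k : ℝ))]

lemma UV_le (p : ℤ × ℤ × ℤ) : U p + V p ≤ 4 * Nr p := by
  obtain ⟨i, j, k⟩ := p
  unfold Nr U V
  nlinarith [sq_nonneg ((i : ℝ) - (j : ℝ)), sq_nonneg ((j : ℝ) - (k : ℝ)),
    sq_nonneg ((i : ℝ) - (k : ℝ))]

lemma cuboidalG_eq (A : ℝ) (p : ℤ × ℤ × ℤ) : cuboidalG A p = (A * U p + V p) / (A + 1) := by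
  unfold cuboidalG U V; ring

lemma G_lb {A : ℝ} (hA : A ∈ Set.Ioo (1/4 : ℝ) 2) {p : ℤ × ℤ × ℤ} (hp : p ≠ 0) :
    Nr p / 12 ≤ cuboidalG A p := by
  obtain ⟨hA1, hA2⟩ := hA
  rw [cuboidalG_eq, div_le_div_iff₀ (by norm_num) (by linarith)]
  have h1 := Nr_le_UV p
  have h2 := U_nonneg p
  have h3 := V_nonneg p
  have h4 := Nr_nonneg p
  nlinarith [mul_nonneg h2 (by linarith : (0:ℝ) ≤ A - 1/4), mul_nonneg h4 (by linarith : (0:ℝ) ≤ 2 - A)]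

lemma G_pos {A : ℝ} (hA : A ∈ Set.Ioo (1/4 : ℝ) 2) {p : ℤ × ℤ × ℤ} (hp : p ≠ 0) :
    0 < cuboidalG A p :=
  lt_of_lt_of_le (by nlinarith [one_le_Nr hp]) (G_lb hA hp)

lemma rpow_est {n G e : ℝ} (hn : 0 < n) (h : n / 12 ≤ G) (he : e ≤ 0) :
    G ^ e ≤ 12 ^ (-e) * n ^ e := by
  calc G ^ e ≤ (n / 12) ^ e := Real.rpow_le_rpow_of_nonpos (by positivity) h he
  _ = 12 ^ (-e) * n ^ e := by
      rw [Real.div_rpow hn.le (by norm_num : (0:ℝ) ≤ 12),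
        Real.rpow_neg (by norm_num : (0:ℝ) ≤ 12), div_eq_mul_inv, mul_comm]

noncomputable def f1 (s : ℝ) (p : ℤ × ℤ × ℤ) (A : ℝ) : ℝ :=
  -s * cuboidalG A p ^ (-s - 1) * ((U p - V p) / (A + 1) ^ 2)

noncomputable def f2 (s : ℝ) (p : ℤ × ℤ × ℤ) (A : ℝ) : ℝ :=
  s * (s + 1) * (U p - V p) ^ 2 * cuboidalG A p ^ (-s - 2) / (A + 1) ^ 4
    + 2 * s * (U p - V p) * cuboidalG A p ^ (-s - 1) / (A + 1) ^ 3

lemma hasDerivAt_G (p : ℤ × ℤ × ℤ) {A : ℝ} (hA : A + 1 ≠ 0) :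
    HasDerivAt (fun B => cuboidalG B p) ((U p - V p) / (A + 1) ^ 2) A := by
  have h1 : HasDerivAt (fun B : ℝ => B * U p + V p) (U p) A :=
    (hasDerivAt_mul_const (U p)).add_const _
  have h2 : HasDerivAt (fun B : ℝ => B + 1) 1 A := (hasDerivAt_id A).add_const 1
  have h3 := h1.div h2 hA
  have hfun : (fun B : ℝ => (B * U p + V p) / (B + 1)) = fun B => cuboidalG B p := by
    funext B
    simp only [cuboidalG, U, V]; ring
  change HasDerivAt (fun B : ℝ => (B * U p + V p) / (B + 1)) _ A at h3
  rw [hfun] at h3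
  convert h3 using 1
  field_simp
  ring

lemma hasDerivAt_e0 (s : ℝ) {A : ℝ} {p : ℤ × ℤ × ℤ} (hA : A + 1 ≠ 0)
    (hG : cuboidalG A p ≠ 0) :
    HasDerivAt (fun B => cuboidalG B p ^ (-s)) (f1 s p A) A := by
  have := (hasDerivAt_G p hA).rpow_const (p := -s) (Or.inl hG)
  convert this using 1
  unfold f1
  ring

lemma hasDerivAt_e1 (s : ℝ) {A : ℝ} (hA : A + 1 ≠ 0) {p : ℤ × ℤ × ℤ}
    (hG : cuboidalG A p ≠ 0) :
    HasDerivAt (fun B => f1 s p B) (f2 s p A) A := by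
  have h4 : HasDerivAt (fun B => cuboidalG B p ^ (-s - 1))
      ((U p - V p) / (A + 1) ^ 2 * (-s - 1) * cuboidalG A p ^ (-s - 1 - 1)) A :=
    (hasDerivAt_G p hA).rpow_const (Or.inl hG)
  have h5 : HasDerivAt (fun B : ℝ => (B + 1) ^ 2) ((2 : ℕ) * (A + 1) ^ (2 - 1) * 1) A :=
    ((hasDerivAt_id A).add_const 1).pow 2
  have h6 := h4.div h5 (pow_ne_zero 2 hA)
  have h7 := h6.const_mul (-s * (U p - V p))
  have hfun : (fun B : ℝ => -s * (U p - V p) * (cuboidalG B p ^ (-s - 1) / (B + 1) ^ 2))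
      = fun B => f1 s p B := by
    funext B; unfold f1; ring
  change HasDerivAt (fun B : ℝ => -s * (U p - V p) * (cuboidalG B p ^ (-s - 1) / (B + 1) ^ 2)) _ A at h7
  rw [hfun] at h7
  convert h7 using 1
  unfold f2
  have he : -s - 1 - 1 = -s - 2 := by ring
  rw [he]
  field_simp
  ring


lemma absUV_le {p : ℤ × ℤ × ℤ} : |U p - V p| ≤ 4 * Nr p := by
  have h1 := U_nonneg p
  have h2 := V_nonneg p
  have h3 := UV_le p
  rw [abs_le]; constructor <;> linarith

lemma e0_bound (s : ℝ) (hs : 0 < s) {p : ℤ × ℤ × ℤ} (hp : p ≠ 0) {A : ℝ}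
    (hA : A ∈ Set.Ioo (1/4 : ℝ) 2) :
    ‖cuboidalG A p ^ (-s)‖ ≤ 12 ^ s * Nr p ^ (-s) := by
  have hn0 : (0 : ℝ) < Nr p := by linarith [one_le_Nr hp]
  have hG0 := G_pos hA hp
  have h1 := rpow_est hn0 (G_lb hA hp) (show -s ≤ 0 by linarith)
  rw [show -(-s) = s by ring] at h1
  rw [Real.norm_eq_abs, abs_of_pos (Real.rpow_pos_of_pos hG0 _)]
  exact h1

lemma f1_bound (s : ℝ) (hs : 0 < s) {p : ℤ × ℤ × ℤ} (hp : p ≠ 0) {A : ℝ}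
    (hA : A ∈ Set.Ioo (1/4 : ℝ) 2) :
    ‖f1 s p A‖ ≤ 4 * s * 12 ^ (s + 1) * Nr p ^ (-s) := by
  have hn : (1:ℝ) ≤ Nr p := one_le_Nr hp
  have hn0 : (0 : ℝ) < Nr p := by linarith
  have hG0 := G_pos hA hp
  have hest := rpow_est hn0 (G_lb hA hp) (show -s - 1 ≤ 0 by linarith)
  rw [show -(-s - 1) = s + 1 by ring] at hest
  have hW := absUV_le (p := p)
  have hA1 : (1 : ℝ) ≤ (A + 1) ^ 2 := by nlinarith [hA.1, hA.2]
  have key : Nr p ^ (-s - 1) * Nr p = Nr p ^ (-s) := by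
    rw [← Real.rpow_add_one (ne_of_gt hn0), show -s - 1 + 1 = -s by ring]
  have h1 : ‖f1 s p A‖ = s * cuboidalG A p ^ (-s - 1) * (|U p - V p| / (A + 1) ^ 2) := by
    rw [f1, Real.norm_eq_abs, abs_mul, abs_mul, abs_neg, abs_of_pos hs,
      abs_of_pos (Real.rpow_pos_of_pos hG0 _), abs_div,
      abs_of_nonneg (by positivity : (0:ℝ) ≤ (A+1)^2)]
  rw [h1]
  calc s * cuboidalG A p ^ (-s - 1) * (|U p - V p| / (A + 1) ^ 2)
      ≤ s * (12 ^ (s + 1) * Nr p ^ (-s - 1)) * ((4 * Nr p) / 1) := by gcongr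
  _ = 4 * s * 12 ^ (s + 1) * Nr p ^ (-s) := by rw [div_one, ← key]; ring

lemma f2_bound (s : ℝ) (hs : 0 < s) {p : ℤ × ℤ × ℤ} (hp : p ≠ 0) {A : ℝ}
    (hA : A ∈ Set.Ioo (1/4 : ℝ) 2) :
    ‖f2 s p A‖ ≤ (16 * (s * (s + 1)) * 12 ^ (s + 2) + 8 * s * 12 ^ (s + 1)) * Nr p ^ (-s) := by
  have hn : (1:ℝ) ≤ Nr p := one_le_Nr hp
  have hn0 : (0 : ℝ) < Nr p := by linarith
  have hG0 := G_pos hA hp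
  have hest1 := rpow_est hn0 (G_lb hA hp) (show -s - 1 ≤ 0 by linarith)
  rw [show -(-s - 1) = s + 1 by ring] at hest1
  have hest2 := rpow_est hn0 (G_lb hA hp) (show -s - 2 ≤ 0 by linarith)
  rw [show -(-s - 2) = s + 2 by ring] at hest2
  have hW := absUV_le (p := p)
  have hW2 : (U p - V p) ^ 2 ≤ (4 * Nr p) ^ 2 := by
    rw [← sq_abs]
    exact pow_le_pow_left₀ (abs_nonneg _) hW 2
  have hA0 : (1 : ℝ) ≤ A + 1 := by linarith [hA.1]
  have hA1 : (1 : ℝ) ≤ (A + 1) ^ 4 := one_le_pow₀ hA0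
  have hA2 : (1 : ℝ) ≤ (A + 1) ^ 3 := one_le_pow₀ hA0
  have key1 : Nr p ^ (-s - 1) * Nr p = Nr p ^ (-s) := by
    rw [← Real.rpow_add_one (ne_of_gt hn0), show -s - 1 + 1 = -s by ring]
  have key2 : Nr p ^ (-s - 2) * Nr p ^ 2 = Nr p ^ (-s) := by
    rw [sq, ← mul_assoc, ← Real.rpow_add_one (ne_of_gt hn0),
      ← Real.rpow_add_one (ne_of_gt hn0), show -s - 2 + 1 + 1 = -s by ring]
  have hpos1 : (0:ℝ) ≤ s * (s + 1) * (U p - V p) ^ 2 * cuboidalG A p ^ (-s - 2) / (A + 1) ^ 4 := by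
    apply div_nonneg _ (by positivity)
    exact mul_nonneg (mul_nonneg (by positivity) (sq_nonneg _)) (Real.rpow_pos_of_pos hG0 _).le
  calc ‖f2 s p A‖ ≤ ‖s * (s + 1) * (U p - V p) ^ 2 * cuboidalG A p ^ (-s - 2) / (A + 1) ^ 4‖
        + ‖2 * s * (U p - V p) * cuboidalG A p ^ (-s - 1) / (A + 1) ^ 3‖ := norm_add_le _ _
  _ = s * (s + 1) * (U p - V p) ^ 2 * cuboidalG A p ^ (-s - 2) / (A + 1) ^ 4
        + 2 * s * |U p - V p| * cuboidalG A p ^ (-s - 1) / (A + 1) ^ 3 := by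
      rw [Real.norm_eq_abs, Real.norm_eq_abs, abs_of_nonneg hpos1, abs_div, abs_mul, abs_mul,
        abs_mul, abs_of_pos (Real.rpow_pos_of_pos hG0 _),
        abs_of_nonneg (by positivity : (0:ℝ) ≤ (A+1)^3)]
      norm_num [abs_of_pos hs]
  _ ≤ s * (s + 1) * (4 * Nr p) ^ 2 * (12 ^ (s + 2) * Nr p ^ (-s - 2)) / 1
        + 2 * s * (4 * Nr p) * (12 ^ (s + 1) * Nr p ^ (-s - 1)) / 1 := by gcongr <;> positivity
  _ = (16 * (s * (s + 1)) * 12 ^ (s + 2) + 8 * s * 12 ^ (s + 1)) * Nr p ^ (-s) := by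
      rw [div_one, div_one]
      linear_combination (16 * (s * (s + 1)) * (12:ℝ) ^ (s + 2)) * key2
        + (8 * s * (12:ℝ) ^ (s + 1)) * key1

lemma summable_base {t : ℝ} (ht : 3/2 < t) :
    Summable (fun m : ℤ => (1 + (m : ℝ)^2) ^ (-(t/3))) := by
  have ht3 : (1 : ℝ) < 2 * (t/3) := by linarith
  have hnat : Summable (fun n : ℕ => (1 + (n : ℝ)^2) ^ (-(t/3))) := by
    have hmaj : Summable (fun n : ℕ => ((n : ℝ) + 1) ^ (-(2 * (t/3)))) := by
      have h0 : Summable (fun n : ℕ => (n : ℝ) ^ (-(2 * (t/3)))) :=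
        Real.summable_nat_rpow.mpr (by linarith)
      have h1 := (summable_nat_add_iff 1).mpr h0
      refine h1.congr fun n => ?_
      push_cast
      ring_nf
    have hbd : ∀ n : ℕ, (1 + (n : ℝ)^2) ^ (-(t/3)) ≤ 2 ^ (t/3) * ((n : ℝ) + 1) ^ (-(2 * (t/3))) := by
      intro n
      have hn0 : (0 : ℝ) ≤ (n : ℝ) := n.cast_nonneg
      have h2 : ((n : ℝ) + 1)^2 / 2 ≤ 1 + (n : ℝ)^2 := by nlinarith [sq_nonneg ((n:ℝ) - 1)]
      have h3 : (0 : ℝ) < ((n : ℝ) + 1)^2 / 2 := by positivity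
      calc (1 + (n : ℝ)^2) ^ (-(t/3)) ≤ (((n : ℝ) + 1)^2 / 2) ^ (-(t/3)) :=
            Real.rpow_le_rpow_of_nonpos h3 h2 (by linarith)
      _ = 2 ^ (t/3) * ((n : ℝ) + 1) ^ (-(2 * (t/3))) := by
          have e1 : (((n:ℝ)+1)^2) ^ (-(t/3)) = ((n:ℝ)+1) ^ (-(2*(t/3))) := by
            rw [← Real.rpow_natCast ((n:ℝ)+1) 2, ← Real.rpow_mul (by positivity)]
            congr 1
            push_cast
            ring
          rw [div_eq_mul_inv, Real.mul_rpow (by positivity) (by norm_num : (0:ℝ) ≤ 2⁻¹), e1,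
            Real.inv_rpow (by norm_num : (0:ℝ) ≤ 2), Real.rpow_neg (by norm_num : (0:ℝ) ≤ 2),
            inv_inv, mul_comm]
    exact Summable.of_nonneg_of_le (fun n => by positivity) hbd (hmaj.mul_left _)
  apply Summable.of_nat_of_neg <;> · exact hnat.congr fun n => by push_cast; ring_nf


lemma Nr_pt_bound {t : ℝ} (ht : 3/2 < t) (p : ℤ × ℤ × ℤ) :
    Nr p ^ (-t) ≤ 2 ^ t * ((1 + (p.1 : ℝ)^2) ^ (-(t/3))
      * ((1 + (p.2.1 : ℝ)^2) ^ (-(t/3)) * (1 + (p.2.2 : ℝ)^2) ^ (-(t/3)))) := by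
  by_cases hp : p = 0
  · subst hp
    have h0 : Nr 0 = 0 := by unfold Nr; norm_num
    rw [h0, Real.zero_rpow (by linarith : -t ≠ 0)]
    positivity
  · obtain ⟨i, j, k⟩ := p
    have hn1 : (1 : ℝ) ≤ Nr (i, j, k) := by
      have h : i ≠ 0 ∨ j ≠ 0 ∨ k ≠ 0 := by
        by_contra h; push_neg at h
        exact hp (by simp [Prod.ext_iff, h.1, h.2.1, h.2.2])
      have key : (1 : ℤ) ≤ i^2 + j^2 + k^2 := by
        rcases h with h | h | h <;> rcases h.lt_or_gt with h | h <;> nlinarith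
      have : ((1 : ℤ) : ℝ) ≤ ((i^2 + j^2 + k^2 : ℤ) : ℝ) := by exact_mod_cast key
      unfold Nr; push_cast at this ⊢; linarith
    have hn0 : (0 : ℝ) < Nr (i, j, k) := by linarith
    have hNr : Nr (i, j, k) = (i:ℝ)^2 + (j:ℝ)^2 + (k:ℝ)^2 := rfl
    have hx2 : (i:ℝ)^2 ≤ Nr (i, j, k) := by rw [hNr]; nlinarith [sq_nonneg (j:ℝ), sq_nonneg (k:ℝ)]
    have hy2 : (j:ℝ)^2 ≤ Nr (i, j, k) := by rw [hNr]; nlinarith [sq_nonneg (i:ℝ), sq_nonneg (k:ℝ)]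
    have hz2 : (k:ℝ)^2 ≤ Nr (i, j, k) := by rw [hNr]; nlinarith [sq_nonneg (i:ℝ), sq_nonneg (j:ℝ)]
    have hcube : (1 + (i:ℝ)^2) * ((1 + (j:ℝ)^2) * (1 + (k:ℝ)^2)) ≤ 8 * Nr (i, j, k) ^ 3 := by
      have h1 : 1 + (i:ℝ)^2 ≤ 2 * Nr (i, j, k) := by linarith
      have h2 : 1 + (j:ℝ)^2 ≤ 2 * Nr (i, j, k) := by linarith
      have h3 : 1 + (k:ℝ)^2 ≤ 2 * Nr (i, j, k) := by linarith
      have e1 : (0:ℝ) ≤ 1 + (i:ℝ)^2 := by positivity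
      have e2 : (0:ℝ) ≤ 1 + (j:ℝ)^2 := by positivity
      have e3 : (0:ℝ) ≤ 1 + (k:ℝ)^2 := by positivity
      calc (1 + (i:ℝ)^2) * ((1 + (j:ℝ)^2) * (1 + (k:ℝ)^2))
          ≤ (2 * Nr (i, j, k)) * ((2 * Nr (i, j, k)) * (2 * Nr (i, j, k))) := by
            apply mul_le_mul h1 _ (mul_nonneg e2 e3) (by linarith)
            apply mul_le_mul h2 h3 e3 (by linarith)
      _ = 8 * Nr (i, j, k) ^ 3 := by ring
    have hP0 : (0:ℝ) < (1 + (i:ℝ)^2) * ((1 + (j:ℝ)^2) * (1 + (k:ℝ)^2)) := by positivity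
    have h4 : (8 * Nr (i, j, k) ^ 3) ^ (-(t/3))
        ≤ ((1 + (i:ℝ)^2) * ((1 + (j:ℝ)^2) * (1 + (k:ℝ)^2))) ^ (-(t/3)) :=
      Real.rpow_le_rpow_of_nonpos hP0 hcube (by linarith)
    have h5 : (8 * Nr (i, j, k) ^ 3) ^ (-(t/3)) = 2 ^ (-t) * Nr (i, j, k) ^ (-t) := by
      rw [Real.mul_rpow (by norm_num) (by positivity)]
      congr 1
      · rw [show (8:ℝ) = 2 ^ (3:ℕ) by norm_num, ← Real.rpow_natCast 2 3,
          ← Real.rpow_mul (by norm_num : (0:ℝ) ≤ 2)]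
        congr 1
        push_cast; ring
      · rw [← Real.rpow_natCast (Nr (i, j, k)) 3, ← Real.rpow_mul hn0.le]
        congr 1
        push_cast; ring
    calc Nr (i, j, k) ^ (-t) = 2 ^ t * (2 ^ (-t) * Nr (i, j, k) ^ (-t)) := by
          rw [← mul_assoc, ← Real.rpow_add (by norm_num : (0:ℝ) < 2)]
          norm_num
    _ = 2 ^ t * (8 * Nr (i, j, k) ^ 3) ^ (-(t/3)) := by rw [h5]
    _ ≤ 2 ^ t * ((1 + (i:ℝ)^2) * ((1 + (j:ℝ)^2) * (1 + (k:ℝ)^2))) ^ (-(t/3)) := by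
        have h6 : (0:ℝ) ≤ 2 ^ t := (Real.rpow_pos_of_pos (by norm_num) t).le
        exact mul_le_mul_of_nonneg_left h4 h6
    _ = 2 ^ t * ((1 + ((i,j,k).1 : ℝ)^2) ^ (-(t/3)) * ((1 + ((i,j,k).2.1 : ℝ)^2) ^ (-(t/3))
          * (1 + ((i,j,k).2.2 : ℝ)^2) ^ (-(t/3)))) := by
        rw [Real.mul_rpow (by positivity) (by positivity),
          Real.mul_rpow (by positivity) (by positivity)]

lemma summable_Nr {t : ℝ} (ht : 3/2 < t) :
    Summable (fun p : ℤ × ℤ × ℤ => Nr p ^ (-t)) := by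
  have hb := summable_base ht
  have hb' : ∀ m : ℤ, (0 : ℝ) < (1 + (m : ℝ)^2) ^ (-(t/3)) :=
    fun m => Real.rpow_pos_of_pos (by positivity) _
  have hprod : Summable (fun p : ℤ × ℤ × ℤ =>
      (1 + (p.1 : ℝ)^2) ^ (-(t/3)) * ((1 + (p.2.1 : ℝ)^2) ^ (-(t/3)) * (1 + (p.2.2 : ℝ)^2) ^ (-(t/3)))) :=
    hb.mul_of_nonneg (hb.mul_of_nonneg hb (fun m => (hb' m).le) (fun m => (hb' m).le))
      (fun m => (hb' m).le)
      (fun q => mul_nonneg (hb' q.1).le (hb' q.2).le)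
  exact Summable.of_nonneg_of_le (fun p => Real.rpow_nonneg (by unfold Nr; positivity) _)
    (fun p => Nr_pt_bound ht p) (hprod.mul_left (2 ^ t))

/-- linear change of variables mapping the bcc form to the symmetric form -/
def Te : ℤ × ℤ × ℤ ≃ ℤ × ℤ × ℤ where
  toFun p := (-p.1, -p.2.1 + p.2.2, p.2.1)
  invFun q := (-q.1, q.2.2, q.2.1 + q.2.2)
  left_inv p := by obtain ⟨i, j, k⟩ := p; simp [Prod.ext_iff]
  right_inv q := by obtain ⟨x, y, z⟩ := q; simp [Prod.ext_iff]

/-- cyclic permutation -/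
def Ce : ℤ × ℤ × ℤ ≃ ℤ × ℤ × ℤ where
  toFun p := (p.2.1, p.2.2, p.1)
  invFun q := (q.2.2, q.1, q.2.1)
  left_inv p := rfl
  right_inv q := rfl

lemma ne_zero_iff_of_equiv (e : ℤ × ℤ × ℤ ≃ ℤ × ℤ × ℤ) (h : e 0 = 0) (p : ℤ × ℤ × ℤ) :
    p ≠ 0 ↔ e p ≠ 0 :=
  not_iff_not.mpr ⟨fun hp => hp ▸ h, fun hp => e.injective (hp.trans h.symm)⟩

def TeS : {p : ℤ × ℤ × ℤ // p ≠ 0} ≃ {p : ℤ × ℤ × ℤ // p ≠ 0} :=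
  Te.subtypeEquiv (ne_zero_iff_of_equiv Te (by simp [Te, Prod.ext_iff]))

def CeS : {p : ℤ × ℤ × ℤ // p ≠ 0} ≃ {p : ℤ × ℤ × ℤ // p ≠ 0} :=
  Ce.subtypeEquiv (ne_zero_iff_of_equiv Ce (by simp [Ce, Prod.ext_iff]))

lemma TeS_val (p : {p : ℤ × ℤ × ℤ // p ≠ 0}) : (TeS p).1 = Te p.1 := rfl
lemma CeS_val (p : {p : ℤ × ℤ × ℤ // p ≠ 0}) : (CeS p).1 = Ce p.1 := rfl

lemma G_Te (p : ℤ × ℤ × ℤ) : cuboidalG (1/2) (Te p) = Qr p := by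
  obtain ⟨i, j, k⟩ := p
  simp only [cuboidalG, Te, Qr, Equiv.coe_fn_mk]
  push_cast
  ring

lemma UV_Te (p : ℤ × ℤ × ℤ) : U (Te p) - V (Te p) = -2 * nr p := by
  obtain ⟨i, j, k⟩ := p
  simp only [U, V, Te, nr, Equiv.coe_fn_mk]
  push_cast
  ring

lemma Qr_Ce (p : ℤ × ℤ × ℤ) : Qr (Ce p) = Qr p := by
  obtain ⟨i, j, k⟩ := p
  simp only [Qr, Ce, Equiv.coe_fn_mk]
  ring

lemma nr_cyc (p : ℤ × ℤ × ℤ) : nr p + nr (Ce p) + nr (Ce (Ce p)) = 0 := by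
  obtain ⟨i, j, k⟩ := p
  simp only [nr, Ce, Equiv.coe_fn_mk]
  ring



lemma b1_bound (s : ℝ) (hs : 0 < s) {p : ℤ × ℤ × ℤ} (hp : p ≠ 0) {A : ℝ}
    (hA : A ∈ Set.Ioo (1/4 : ℝ) 2) :
    ‖(U p - V p) * cuboidalG A p ^ (-s - 1)‖ ≤ 4 * 12 ^ (s + 1) * Nr p ^ (-s) := by
  have hn : (1:ℝ) ≤ Nr p := one_le_Nr hp
  have hn0 : (0 : ℝ) < Nr p := by linarith
  have hG0 := G_pos hA hp
  have hest := rpow_est hn0 (G_lb hA hp) (show -s - 1 ≤ 0 by linarith)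
  rw [show -(-s - 1) = s + 1 by ring] at hest
  have hW := absUV_le (p := p)
  have key : Nr p ^ (-s - 1) * Nr p = Nr p ^ (-s) := by
    rw [← Real.rpow_add_one (ne_of_gt hn0), show -s - 1 + 1 = -s by ring]
  rw [Real.norm_eq_abs, abs_mul, abs_of_pos (Real.rpow_pos_of_pos hG0 _)]
  calc |U p - V p| * cuboidalG A p ^ (-s - 1)
      ≤ (4 * Nr p) * (12 ^ (s + 1) * Nr p ^ (-s - 1)) := by gcongr
  _ = 4 * 12 ^ (s + 1) * Nr p ^ (-s) := by rw [← key]; ring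

lemma b2_bound (s : ℝ) (hs : 0 < s) {p : ℤ × ℤ × ℤ} (hp : p ≠ 0) {A : ℝ}
    (hA : A ∈ Set.Ioo (1/4 : ℝ) 2) :
    ‖(U p - V p) ^ 2 * cuboidalG A p ^ (-s - 2)‖ ≤ 16 * 12 ^ (s + 2) * Nr p ^ (-s) := by
  have hn : (1:ℝ) ≤ Nr p := one_le_Nr hp
  have hn0 : (0 : ℝ) < Nr p := by linarith
  have hG0 := G_pos hA hp
  have hest := rpow_est hn0 (G_lb hA hp) (show -s - 2 ≤ 0 by linarith)
  rw [show -(-s - 2) = s + 2 by ring] at hest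
  have hW := absUV_le (p := p)
  have hW2 : (U p - V p) ^ 2 ≤ (4 * Nr p) ^ 2 := by
    rw [← sq_abs]
    exact pow_le_pow_left₀ (abs_nonneg _) hW 2
  have key : Nr p ^ (-s - 2) * Nr p ^ 2 = Nr p ^ (-s) := by
    rw [sq, ← mul_assoc, ← Real.rpow_add_one (ne_of_gt hn0),
      ← Real.rpow_add_one (ne_of_gt hn0), show -s - 2 + 1 + 1 = -s by ring]
  rw [Real.norm_eq_abs, abs_mul, abs_of_pos (Real.rpow_pos_of_pos hG0 _), abs_of_nonneg (sq_nonneg _)]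
  calc (U p - V p) ^ 2 * cuboidalG A p ^ (-s - 2)
      ≤ ((4 * Nr p) ^ 2) * (12 ^ (s + 2) * Nr p ^ (-s - 2)) := by gcongr
  _ = 16 * 12 ^ (s + 2) * Nr p ^ (-s) := by rw [← key]; ring

end CuboidalAux

open CuboidalAux in
/-- For fixed real `s > 3/2`, the second partial derivative of `L(A;s)`
with respect to `A` at `A = 1/2` equals
`(64s(s+1)/81)·Σ' (jk+ik−2ij)²/(i²+j²+k²−(2/3)(ij+ik+jk))^{s+2}`. -/
theorem epsteinL_second_deriv_at_half (s : ℝ) (hs : s > 3/2) :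
    deriv (deriv (fun A : ℝ => epsteinL A s)) (1/2) =
      64 * s * (s + 1) / 81 * ∑' p : {p : ℤ × ℤ × ℤ // p ≠ 0},
        (((p.1.2.1 * p.1.2.2 + p.1.1 * p.1.2.2 - 2 * p.1.1 * p.1.2.1 : ℤ) : ℝ))^2 /
          ((p.1.1 : ℝ)^2 + (p.1.2.1 : ℝ)^2 + (p.1.2.2 : ℝ)^2
            - 2/3 * ((p.1.1 : ℝ) * (p.1.2.1 : ℝ) + (p.1.1 : ℝ) * (p.1.2.2 : ℝ)
              + (p.1.2.1 : ℝ) * (p.1.2.2 : ℝ))) ^ (s + 2) := by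
  classical
  have hs0 : (0:ℝ) < s := by linarith
  have hDo : IsOpen (Set.Ioo (1/4 : ℝ) 2) := isOpen_Ioo
  have hDc : IsPreconnected (Set.Ioo (1/4 : ℝ) 2) := (convex_Ioo (1/4:ℝ) 2).isPreconnected
  have hhalf : (1/2 : ℝ) ∈ Set.Ioo (1/4 : ℝ) 2 := by constructor <;> norm_num
  have hNs : Summable (fun p : {p : ℤ × ℤ × ℤ // p ≠ 0} => Nr p.1 ^ (-s)) :=
    (summable_Nr hs).subtype _
  have hAne : ∀ B : ℝ, B ∈ Set.Ioo (1/4 : ℝ) 2 → B + 1 ≠ 0 := by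
    intro B hB
    have : (0:ℝ) < B + 1 := by linarith [hB.1]
    exact this.ne'
  -- first differentiation under the sum
  have H1 : ∀ A ∈ Set.Ioo (1/4 : ℝ) 2,
      HasDerivAt (fun B : ℝ => ∑' p : {p : ℤ × ℤ × ℤ // p ≠ 0}, cuboidalG B p.1 ^ (-s))
        (∑' p : {p : ℤ × ℤ × ℤ // p ≠ 0}, f1 s p.1 A) A := by
    intro A hA
    exact hasDerivAt_tsum_of_isPreconnected (hNs.mul_left (4 * s * 12 ^ (s + 1))) hDo hDc
      (fun p B hB => hasDerivAt_e0 s (hAne B hB) (G_pos hB p.2).ne')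
      (fun p B hB => f1_bound s hs0 p.2 hB)
      hhalf
      (Summable.of_norm_bounded (hNs.mul_left (12 ^ s)) (fun p => e0_bound s hs0 p.2 hhalf))
      hA
  have hEv : deriv (fun A : ℝ => epsteinL A s)
      =ᶠ[nhds (1/2 : ℝ)] (fun A => ∑' p : {p : ℤ × ℤ × ℤ // p ≠ 0}, f1 s p.1 A) := by
    filter_upwards [hDo.mem_nhds hhalf] with A hA
    exact (H1 A hA).deriv
  have step1 : deriv (deriv (fun A : ℝ => epsteinL A s)) (1/2)
      = deriv (fun A => ∑' p : {p : ℤ × ℤ × ℤ // p ≠ 0}, f1 s p.1 A) (1/2) := hEv.deriv_eq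
  -- second differentiation under the sum
  have H2 : HasDerivAt (fun A : ℝ => ∑' p : {p : ℤ × ℤ × ℤ // p ≠ 0}, f1 s p.1 A)
      (∑' p : {p : ℤ × ℤ × ℤ // p ≠ 0}, f2 s p.1 (1/2)) (1/2) :=
    hasDerivAt_tsum_of_isPreconnected
      (hNs.mul_left (16 * (s * (s + 1)) * 12 ^ (s + 2) + 8 * s * 12 ^ (s + 1))) hDo hDc
      (fun p B hB => hasDerivAt_e1 s (hAne B hB) (G_pos hB p.2).ne')
      (fun p B hB => f2_bound s hs0 p.2 hB)
      hhalf
      (Summable.of_norm_bounded (hNs.mul_left (4 * s * 12 ^ (s + 1)))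
        (fun p => f1_bound s hs0 p.2 hhalf))
      hhalf
  have step2 : deriv (fun A => ∑' p : {p : ℤ × ℤ × ℤ // p ≠ 0}, f1 s p.1 A) (1/2)
      = ∑' p : {p : ℤ × ℤ × ℤ // p ≠ 0}, f2 s p.1 (1/2) := H2.deriv
  -- summability of the two pieces at 1/2
  have Sa : Summable (fun p : {p : ℤ × ℤ × ℤ // p ≠ 0} =>
      (U p.1 - V p.1) ^ 2 * cuboidalG (1/2) p.1 ^ (-s - 2)) :=
    Summable.of_norm_bounded (hNs.mul_left (16 * 12 ^ (s + 2)))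
      (fun p => b2_bound s hs0 p.2 hhalf)
  have Sb : Summable (fun p : {p : ℤ × ℤ × ℤ // p ≠ 0} =>
      (U p.1 - V p.1) * cuboidalG (1/2) p.1 ^ (-s - 1)) :=
    Summable.of_norm_bounded (hNs.mul_left (4 * 12 ^ (s + 1)))
      (fun p => b1_bound s hs0 p.2 hhalf)
  -- pointwise splitting of f2 at 1/2
  have hpt : ∀ p : {p : ℤ × ℤ × ℤ // p ≠ 0}, f2 s p.1 (1/2)
      = (s * (s + 1) * (16/81)) * ((U p.1 - V p.1) ^ 2 * cuboidalG (1/2) p.1 ^ (-s - 2))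
        + (16 * s / 27) * ((U p.1 - V p.1) * cuboidalG (1/2) p.1 ^ (-s - 1)) := by
    intro p
    rw [f2]
    norm_num
    ring
  have key0 : (∑' p : {p : ℤ × ℤ × ℤ // p ≠ 0}, f2 s p.1 (1/2))
      = (s * (s + 1) * (16/81)) * (∑' p : {p : ℤ × ℤ × ℤ // p ≠ 0},
          (U p.1 - V p.1) ^ 2 * cuboidalG (1/2) p.1 ^ (-s - 2))
        + (16 * s / 27) * (∑' p : {p : ℤ × ℤ × ℤ // p ≠ 0},
          (U p.1 - V p.1) * cuboidalG (1/2) p.1 ^ (-s - 1)) := by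
    rw [tsum_congr hpt, Summable.tsum_add (Sa.mul_left _) (Sb.mul_left _), tsum_mul_left, tsum_mul_left]
  -- reindex the quadratic piece via Te
  have hTa : (∑' p : {p : ℤ × ℤ × ℤ // p ≠ 0},
      (U p.1 - V p.1) ^ 2 * cuboidalG (1/2) p.1 ^ (-s - 2))
      = 4 * ∑' q : {p : ℤ × ℤ × ℤ // p ≠ 0}, nr q.1 ^ 2 * Qr q.1 ^ (-s - 2) := by
    calc (∑' p : {p : ℤ × ℤ × ℤ // p ≠ 0},
        (U p.1 - V p.1) ^ 2 * cuboidalG (1/2) p.1 ^ (-s - 2))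
        = ∑' q : {p : ℤ × ℤ × ℤ // p ≠ 0},
            (U (Te q.1) - V (Te q.1)) ^ 2 * cuboidalG (1/2) (Te q.1) ^ (-s - 2) :=
          (TeS.tsum_eq (fun p => (U p.1 - V p.1) ^ 2 * cuboidalG (1/2) p.1 ^ (-s - 2))).symm
    _ = ∑' q : {p : ℤ × ℤ × ℤ // p ≠ 0}, 4 * (nr q.1 ^ 2 * Qr q.1 ^ (-s - 2)) := by
        apply tsum_congr
        intro q
        rw [UV_Te, G_Te]
        ring
    _ = 4 * ∑' q : {p : ℤ × ℤ × ℤ // p ≠ 0}, nr q.1 ^ 2 * Qr q.1 ^ (-s - 2) := tsum_mul_left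
  -- reindex the linear piece via Te
  have hTb : (∑' p : {p : ℤ × ℤ × ℤ // p ≠ 0},
      (U p.1 - V p.1) * cuboidalG (1/2) p.1 ^ (-s - 1))
      = (-2) * ∑' q : {p : ℤ × ℤ × ℤ // p ≠ 0}, nr q.1 * Qr q.1 ^ (-s - 1) := by
    calc (∑' p : {p : ℤ × ℤ × ℤ // p ≠ 0},
        (U p.1 - V p.1) * cuboidalG (1/2) p.1 ^ (-s - 1))
        = ∑' q : {p : ℤ × ℤ × ℤ // p ≠ 0},
            (U (Te q.1) - V (Te q.1)) * cuboidalG (1/2) (Te q.1) ^ (-s - 1) :=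
          (TeS.tsum_eq (fun p => (U p.1 - V p.1) * cuboidalG (1/2) p.1 ^ (-s - 1))).symm
    _ = ∑' q : {p : ℤ × ℤ × ℤ // p ≠ 0}, (-2) * (nr q.1 * Qr q.1 ^ (-s - 1)) := by
        apply tsum_congr
        intro q
        rw [UV_Te, G_Te]
        ring
    _ = (-2) * ∑' q : {p : ℤ × ℤ × ℤ // p ≠ 0}, nr q.1 * Qr q.1 ^ (-s - 1) := tsum_mul_left
  -- the linear sum vanishes by the cyclic symmetry
  have hSsum : Summable (fun q : {p : ℤ × ℤ × ℤ // p ≠ 0} => nr q.1 * Qr q.1 ^ (-s - 1)) := by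
    have h1 : Summable ((fun p : {p : ℤ × ℤ × ℤ // p ≠ 0} =>
        (U p.1 - V p.1) * cuboidalG (1/2) p.1 ^ (-s - 1)) ∘ TeS) := TeS.summable_iff.mpr Sb
    have h2 := h1.mul_left (-(1:ℝ)/2)
    refine h2.congr fun q => ?_
    simp only [Function.comp_apply, TeS_val, UV_Te, G_Te]
    ring
  have hfC : Summable (fun q : {p : ℤ × ℤ × ℤ // p ≠ 0} => nr (Ce q.1) * Qr q.1 ^ (-s - 1)) := by
    have h1 : Summable ((fun q : {p : ℤ × ℤ × ℤ // p ≠ 0} =>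
        nr q.1 * Qr q.1 ^ (-s - 1)) ∘ CeS) := CeS.summable_iff.mpr hSsum
    refine h1.congr fun q => ?_
    simp only [Function.comp_apply, CeS_val, Qr_Ce]
  have hfC2 : Summable (fun q : {p : ℤ × ℤ × ℤ // p ≠ 0} =>
      nr (Ce (Ce q.1)) * Qr q.1 ^ (-s - 1)) := by
    have h1 : Summable ((fun q : {p : ℤ × ℤ × ℤ // p ≠ 0} =>
        nr q.1 * Qr q.1 ^ (-s - 1)) ∘ (CeS.trans CeS)) := (CeS.trans CeS).summable_iff.mpr hSsum
    refine h1.congr fun q => ?_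
    simp only [Function.comp_apply, Equiv.trans_apply, CeS_val, Qr_Ce]
  have hsum1 : (∑' q : {p : ℤ × ℤ × ℤ // p ≠ 0}, nr (Ce q.1) * Qr q.1 ^ (-s - 1))
      = ∑' q : {p : ℤ × ℤ × ℤ // p ≠ 0}, nr q.1 * Qr q.1 ^ (-s - 1) := by
    calc (∑' q : {p : ℤ × ℤ × ℤ // p ≠ 0}, nr (Ce q.1) * Qr q.1 ^ (-s - 1))
        = ∑' q : {p : ℤ × ℤ × ℤ // p ≠ 0}, nr (Ce q.1) * Qr (Ce q.1) ^ (-s - 1) := by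
          exact tsum_congr fun q => by rw [Qr_Ce]
    _ = ∑' q : {p : ℤ × ℤ × ℤ // p ≠ 0}, nr q.1 * Qr q.1 ^ (-s - 1) :=
          CeS.tsum_eq (fun q => nr q.1 * Qr q.1 ^ (-s - 1))
  have hsum2 : (∑' q : {p : ℤ × ℤ × ℤ // p ≠ 0}, nr (Ce (Ce q.1)) * Qr q.1 ^ (-s - 1))
      = ∑' q : {p : ℤ × ℤ × ℤ // p ≠ 0}, nr q.1 * Qr q.1 ^ (-s - 1) := by
    calc (∑' q : {p : ℤ × ℤ × ℤ // p ≠ 0}, nr (Ce (Ce q.1)) * Qr q.1 ^ (-s - 1))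
        = ∑' q : {p : ℤ × ℤ × ℤ // p ≠ 0}, nr (Ce (Ce q.1)) * Qr (Ce (Ce q.1)) ^ (-s - 1) := by
          exact tsum_congr fun q => by rw [Qr_Ce, Qr_Ce]
    _ = ∑' q : {p : ℤ × ℤ × ℤ // p ≠ 0}, nr q.1 * Qr q.1 ^ (-s - 1) :=
          (CeS.trans CeS).tsum_eq (fun q => nr q.1 * Qr q.1 ^ (-s - 1))
  have hS0 : (∑' q : {p : ℤ × ℤ × ℤ // p ≠ 0}, nr q.1 * Qr q.1 ^ (-s - 1)) = 0 := by
    have hzero : (∑' q : {p : ℤ × ℤ × ℤ // p ≠ 0},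
        (nr q.1 * Qr q.1 ^ (-s - 1) + (nr (Ce q.1) * Qr q.1 ^ (-s - 1)
          + nr (Ce (Ce q.1)) * Qr q.1 ^ (-s - 1)))) = 0 := by
      have : ∀ q : {p : ℤ × ℤ × ℤ // p ≠ 0},
          nr q.1 * Qr q.1 ^ (-s - 1) + (nr (Ce q.1) * Qr q.1 ^ (-s - 1)
            + nr (Ce (Ce q.1)) * Qr q.1 ^ (-s - 1)) = 0 := by
        intro q
        have := nr_cyc q.1
        linear_combination Qr q.1 ^ (-s - 1) * this
      rw [tsum_congr this]
      exact tsum_zero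
    rw [Summable.tsum_add hSsum (hfC.add hfC2), Summable.tsum_add hfC hfC2, hsum1, hsum2] at hzero
    linarith
  -- positivity of Qr on nonzero points
  have hQpos : ∀ q : {p : ℤ × ℤ × ℤ // p ≠ 0}, 0 < Qr q.1 := by
    intro q
    have hTe0 : Te (0 : ℤ × ℤ × ℤ) = 0 := by simp [Te, Prod.ext_iff]
    have hTne : Te q.1 ≠ 0 := (ne_zero_iff_of_equiv Te hTe0 q.1).mp q.2
    rw [← G_Te q.1]
    exact G_pos hhalf hTne
  -- final identification with the target sum
  have hfinal : (∑' q : {p : ℤ × ℤ × ℤ // p ≠ 0}, nr q.1 ^ 2 * Qr q.1 ^ (-s - 2))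
      = ∑' p : {p : ℤ × ℤ × ℤ // p ≠ 0},
        (((p.1.2.1 * p.1.2.2 + p.1.1 * p.1.2.2 - 2 * p.1.1 * p.1.2.1 : ℤ) : ℝ))^2 /
          ((p.1.1 : ℝ)^2 + (p.1.2.1 : ℝ)^2 + (p.1.2.2 : ℝ)^2
            - 2/3 * ((p.1.1 : ℝ) * (p.1.2.1 : ℝ) + (p.1.1 : ℝ) * (p.1.2.2 : ℝ)
              + (p.1.2.1 : ℝ) * (p.1.2.2 : ℝ))) ^ (s + 2) := by
    apply tsum_congr
    intro q
    have hc : ((q.1.2.1 * q.1.2.2 + q.1.1 * q.1.2.2 - 2 * q.1.1 * q.1.2.1 : ℤ) : ℝ) = nr q.1 := by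
      rw [nr]
      push_cast
      ring
    show nr q.1 ^ 2 * Qr q.1 ^ (-s - 2)
      = (((q.1.2.1 * q.1.2.2 + q.1.1 * q.1.2.2 - 2 * q.1.1 * q.1.2.1 : ℤ) : ℝ))^2
        / Qr q.1 ^ (s + 2)
    rw [hc, show -s - 2 = -(s + 2) by ring, Real.rpow_neg (hQpos q).le, div_eq_mul_inv]
  rw [step1, step2, key0, hTa, hTb, hS0, hfinal]
  ring
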